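/- Soundness of the Reluplex calculus, satisfiable case: if φ is a conjunction of linear atoms and ReLU atoms and there exists a witness from φ (a Reluplex derivation from the initial configuration of φ ending in a derivation tree with at least one SAT leaf), then φ is satisfiable; moreover, the assignment α of any node to which the ReluSuccess rule was applied satisfies every atom of φ. -/

import Mathlib

open scoped Classical

/-- A (non-distinguished) Reluplex configuration over the variable set `V`:
basic variables, tableau coefficients, lower/upper bounds (possibly infinite),
current assignment, and the set of ReLU pairs. -/
structure Config (V : Type*) where
  basic : Finset V
  T : V → V → ℝ
  l : V → EReal
  u : V → EReal
  α : V → ℝ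
  R : Finset (V × V)

namespace Config

variable {V : Type*} [Fintype V] [DecidableEq V]

/-- The right-hand side `Σ_{j ∉ basic} T i j * β j` of the tableau row of `i`. -/
noncomputable def rowSum (c : Config V) (i : V) (β : V → ℝ) : ℝ :=
  ∑ j ∈ Finset.univ.filter (fun j => j ∉ c.basic), c.T i j * β j

/-- An assignment `β` satisfies all equations of the tableau of `c`. -/
def SatTab (c : Config V) (β : V → ℝ) : Prop :=
  ∀ i ∈ c.basic, β i = c.rowSum i β

/-- An assignment `β` respects all the lower and upper bounds of `c`. -/
def InBounds (c : Config V) (β : V → ℝ) : Prop :=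
  ∀ x, c.l x ≤ (β x : EReal) ∧ (β x : EReal) ≤ c.u x

/-- `slack⁺(x_i)`. -/
def slackPos (c : Config V) (i : V) : Set V :=
  { j | j ∉ c.basic ∧
      ((0 < c.T i j ∧ (c.α j : EReal) < c.u j) ∨ (c.T i j < 0 ∧ c.l j < (c.α j : EReal))) }

/-- `slack⁻(x_i)`. -/
def slackNeg (c : Config V) (i : V) : Set V :=
  { j | j ∉ c.basic ∧
      ((c.T i j < 0 ∧ (c.α j : EReal) < c.u j) ∨ (0 < c.T i j ∧ c.l j < (c.α j : EReal))) }

/-- The `pivot(T,i,j)` operation: `x_i` leaves the basis and `x_j` enters it;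
the row of `x_i` is solved for `x_j`, and the result is substituted for `x_j`
in all other rows. -/
noncomputable def pivotConfig (c : Config V) (i j : V) : Config V :=
  { c with
    basic := insert j (c.basic.erase i)
    T := fun r k =>
      if r = j then (if k = i then 1 / c.T i j else - (c.T i k / c.T i j))
      else (if k = i then c.T r j / c.T i j
            else c.T r k - c.T r j * c.T i k / c.T i j) }

/-- The `update(α, x_j, δ)` operation for a non-basic variable `x_j`. -/
noncomputable def updateConfig (c : Config V) (j : V) (δ : ℝ) : Config V :=
  { c with
    α := fun k =>
      if k = j then c.α k + δ
      else if k ∈ c.basic then c.α k + δ * c.T k j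
      else c.α k }

/-- The candidate tighter lower bound `Σ_{T i j>0} T i j * l j + Σ_{T i j<0} T i j * u j`. -/
noncomputable def derivedLower (c : Config V) (i : V) : EReal :=
  (∑ j ∈ Finset.univ.filter (fun j => j ∉ c.basic ∧ 0 < c.T i j),
      (c.T i j : EReal) * c.l j)
  + ∑ j ∈ Finset.univ.filter (fun j => j ∉ c.basic ∧ c.T i j < 0),
      (c.T i j : EReal) * c.u j

/-- The candidate tighter upper bound `Σ_{T i j>0} T i j * u j + Σ_{T i j<0} T i j * l j`. -/
noncomputable def derivedUpper (c : Config V) (i : V) : EReal :=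
  (∑ j ∈ Finset.univ.filter (fun j => j ∉ c.basic ∧ 0 < c.T i j),
      (c.T i j : EReal) * c.u j)
  + ∑ j ∈ Finset.univ.filter (fun j => j ∉ c.basic ∧ c.T i j < 0),
      (c.T i j : EReal) * c.l j

end Config

/-- A Reluplex configuration: either one of the distinguished symbols `SAT`, `UNSAT`,
or a tuple `⟨B, T, l, u, α, R⟩`. -/
inductive RConfig (V : Type*) where
  | SAT : RConfig V
  | UNSAT : RConfig V
  | node : Config V → RConfig V

/-- One application of a Reluplex derivation rule to the configuration `c`,
producing the given list of child configurations. -/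
inductive Step {V : Type*} [Fintype V] [DecidableEq V] :
    Config V → List (RConfig V) → Prop
  | pivot1 (c : Config V) (i j : V) (hi : i ∈ c.basic)
      (hlo : (c.α i : EReal) < c.l i) (hj : j ∈ c.slackPos i) :
      Step c [RConfig.node (c.pivotConfig i j)]
  | pivot2 (c : Config V) (i j : V) (hi : i ∈ c.basic)
      (hhi : c.u i < (c.α i : EReal)) (hj : j ∈ c.slackNeg i) :
      Step c [RConfig.node (c.pivotConfig i j)]
  | update (c : Config V) (j : V) (δ : ℝ) (hj : j ∉ c.basic)
      (hviol : (c.α j : EReal) < c.l j ∨ c.u j < (c.α j : EReal))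
      (hlo : c.l j ≤ ((c.α j + δ : ℝ) : EReal))
      (hhi : ((c.α j + δ : ℝ) : EReal) ≤ c.u j) :
      Step c [RConfig.node (c.updateConfig j δ)]
  | failure (c : Config V) (i : V) (hi : i ∈ c.basic)
      (h : ((c.α i : EReal) < c.l i ∧ c.slackPos i = ∅) ∨
           (c.u i < (c.α i : EReal) ∧ c.slackNeg i = ∅)) :
      Step c [RConfig.UNSAT]
  | updateB (c : Config V) (i j : V) (hR : (i, j) ∈ c.R) (hi : i ∉ c.basic)
      (hne : c.α j ≠ max 0 (c.α i)) (hpos : 0 ≤ c.α j) :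
      Step c [RConfig.node (c.updateConfig i (c.α j - c.α i))]
  | updateF (c : Config V) (i j : V) (hR : (i, j) ∈ c.R) (hj : j ∉ c.basic)
      (hne : c.α j ≠ max 0 (c.α i)) :
      Step c [RConfig.node (c.updateConfig j (max 0 (c.α i) - c.α j))]
  | pivotForRelu (c : Config V) (i j : V) (hi : i ∈ c.basic)
      (hrel : ∃ x, (i, x) ∈ c.R ∨ (x, i) ∈ c.R) (hj : j ∉ c.basic)
      (hT : c.T i j ≠ 0) :
      Step c [RConfig.node (c.pivotConfig i j)]
  | reluSplit (c : Config V) (i j : V) (hR : (i, j) ∈ c.R)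
      (hl : c.l i < 0) (hu : 0 < c.u i) :
      Step c [RConfig.node { c with u := fun k => if k = i then 0 else c.u k },
              RConfig.node { c with l := fun k => if k = i then 0 else c.l k }]
  | reluSuccess (c : Config V) (hb : c.InBounds c.α)
      (hr : ∀ p ∈ c.R, c.α p.2 = max 0 (c.α p.1)) :
      Step c [RConfig.SAT]
  | deriveLowerBound (c : Config V) (i : V) (hi : i ∈ c.basic)
      (h : c.l i < c.derivedLower i) :
      Step c [RConfig.node { c with l := fun k => if k = i then c.derivedLower i else c.l k }]
  | deriveUpperBound (c : Config V) (i : V) (hi : i ∈ c.basic)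
      (h : c.derivedUpper i < c.u i) :
      Step c [RConfig.node { c with u := fun k => if k = i then c.derivedUpper i else c.u k }]

/-- Derivation trees: trees of Reluplex configurations. -/
inductive DTree (V : Type*) where
  | leaf : RConfig V → DTree V
  | node : RConfig V → List (DTree V) → DTree V

namespace DTree

variable {V : Type*}

/-- The configuration at the root of a derivation tree. -/
def root : DTree V → RConfig V
  | DTree.leaf s => s
  | DTree.node s _ => s

/-- `Mem s t`: the configuration `s` appears (as some node) in the tree `t`. -/
inductive Mem : RConfig V → DTree V → Prop
  | leaf (s : RConfig V) : Mem s (DTree.leaf s)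
  | root (s : RConfig V) (ts : List (DTree V)) : Mem s (DTree.node s ts)
  | child {s s' : RConfig V} {t : DTree V} {ts : List (DTree V)}
      (h : Mem s t) (ht : t ∈ ts) : Mem s (DTree.node s' ts)

/-- `LeafMem s t`: the configuration `s` appears as a leaf of the tree `t`. -/
inductive LeafMem : RConfig V → DTree V → Prop
  | leaf (s : RConfig V) : LeafMem s (DTree.leaf s)
  | child {s s' : RConfig V} {t : DTree V} {ts : List (DTree V)}
      (h : LeafMem s t) (ht : t ∈ ts) : LeafMem s (DTree.node s' ts)

/-- `Sub t t'`: `t` is a subtree of `t'`. -/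
inductive Sub : DTree V → DTree V → Prop
  | refl (t : DTree V) : Sub t t
  | child {t t' : DTree V} {s : RConfig V} {ts : List (DTree V)}
      (h : Sub t t') (ht : t' ∈ ts) : Sub t (DTree.node s ts)

end DTree

/-- `Expand D D'`: `D'` is obtained from `D` by applying exactly one derivation
rule to one of the leaves of `D`. -/
inductive Expand {V : Type*} [Fintype V] [DecidableEq V] : DTree V → DTree V → Prop
  | here {c : Config V} {ts : List (RConfig V)} (h : Step c ts) :
      Expand (DTree.leaf (RConfig.node c)) (DTree.node (RConfig.node c) (ts.map DTree.leaf))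
  | child {s : RConfig V} {pre post : List (DTree V)} {t t' : DTree V}
      (h : Expand t t') :
      Expand (DTree.node s (pre ++ t :: post)) (DTree.node s (pre ++ t' :: post))

/-- `IsDerivation s0 m D`: `D 0, D 1, …, D m` is a Reluplex derivation starting
from the derivation tree consisting of the single node `s0`. -/
def IsDerivation {V : Type*} [Fintype V] [DecidableEq V]
    (s0 : Config V) (m : ℕ) (D : ℕ → DTree V) : Prop :=
  D 0 = DTree.leaf (RConfig.node s0) ∧ ∀ i < m, Expand (D i) (D (i + 1))

/-- The relation symbol of a linear atom: `=`, `≤` or `≥`. -/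
inductive LinRel where
  | eq : LinRel
  | le : LinRel
  | ge : LinRel

/-- A linear atom `Σ_j coeff j * x_j ⋈ d` over the variables `Fin n`. -/
structure LinAtom (n : ℕ) where
  coeff : Fin n → ℝ
  rel : LinRel
  d : ℝ

/-- The assignment `β` satisfies the linear atom `a`. -/
def LinAtom.Holds {n : ℕ} (a : LinAtom n) (β : Fin n → ℝ) : Prop :=
  match a.rel with
  | LinRel.eq => ∑ j, a.coeff j * β j = a.d
  | LinRel.le => ∑ j, a.coeff j * β j ≤ a.d
  | LinRel.ge => a.d ≤ ∑ j, a.coeff j * β j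

/-- A conjunction `φ` of linear atoms and ReLU atoms `ReLU(x, y)` over the
variables `Fin n`. -/
structure Phi (n : ℕ) where
  lin : List (LinAtom n)
  relu : Finset (Fin n × Fin n)

/-- The assignment `β` satisfies every atom of `φ`. -/
def Phi.Sat {n : ℕ} (φ : Phi n) (β : Fin n → ℝ) : Prop :=
  (∀ a ∈ φ.lin, a.Holds β) ∧ ∀ p ∈ φ.relu, β p.2 = max 0 (β p.1)

/-- `φ` is satisfiable: some real assignment satisfies every atom of `φ`. -/
def Phi.Satisfiable {n : ℕ} (φ : Phi n) : Prop :=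
  ∃ β : Fin n → ℝ, φ.Sat β

/-- The initial configuration of `φ`: for the `a`-th linear atom a fresh basic
variable `Sum.inr a` is introduced, with tableau row `Σ_j coeff j * x_j` and with
`d` as its corresponding bound(s); all original variables `Sum.inl j` are
non-basic and unbounded, except that forward-facing ReLU variables get lower
bound `0`; the assignment is identically `0`; and `R` consists of the ReLU atoms. -/
noncomputable def Phi.init {n : ℕ} (φ : Phi n) :
    Config (Fin n ⊕ Fin φ.lin.length) :=
  { basic := Finset.univ.filter (fun v => v.isRight)
    T := fun r k =>
      match r, k with
      | Sum.inr a, Sum.inl j => (φ.lin.get a).coeff j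
      | _, _ => 0
    l := fun v =>
      match v with
      | Sum.inl j => if ∃ x, (x, j) ∈ φ.relu then (0 : EReal) else ⊥
      | Sum.inr a =>
        match (φ.lin.get a).rel with
        | LinRel.eq => ((φ.lin.get a).d : EReal)
        | LinRel.ge => ((φ.lin.get a).d : EReal)
        | LinRel.le => ⊥
    u := fun v =>
      match v with
      | Sum.inl _ => ⊤
      | Sum.inr a =>
        match (φ.lin.get a).rel with
        | LinRel.eq => ((φ.lin.get a).d : EReal)
        | LinRel.le => ((φ.lin.get a).d : EReal)
        | LinRel.ge => ⊤
    α := fun _ => 0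
    R := φ.relu.image (fun p => (Sum.inl p.1, Sum.inl p.2)) }

section Aux

open Finset

variable {V : Type*} [Fintype V] [DecidableEq V]

lemma satTab_pivot_iff (c : Config V) (i j : V) (hi : i ∈ c.basic) (hj : j ∉ c.basic)
    (hT : c.T i j ≠ 0) (β : V → ℝ) :
    (c.pivotConfig i j).SatTab β ↔ c.SatTab β := by
  have hij : i ≠ j := by rintro rfl; exact hj hi
  set N : Finset V := Finset.univ.filter (fun k => k ∉ c.basic) with hN
  have hjN : j ∈ N := by simp [hN, hj]
  have hiN : i ∉ N.erase j := by simp [hN, hi]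
  have hNB' : Finset.univ.filter (fun k => k ∉ (c.pivotConfig i j).basic)
      = insert i (N.erase j) := by
    ext k
    simp only [hN, Config.pivotConfig, Finset.mem_filter, Finset.mem_univ, true_and,
      Finset.mem_insert, Finset.mem_erase]
    by_cases hk : k = i <;> simp [hk, hi, hij, Ne.symm hij]
  have hrow_j : (c.pivotConfig i j).rowSum j β
      = (1 / c.T i j) * β i + ∑ k ∈ N.erase j, -(c.T i k / c.T i j) * β k := by
    unfold Config.rowSum
    rw [hNB', Finset.sum_insert hiN]
    congr 1
    · simp [Config.pivotConfig]
    · refine Finset.sum_congr rfl fun k hk => ?_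
      have hkN : k ∈ N := Finset.mem_of_mem_erase hk
      have hki : k ≠ i := by
        rintro rfl; simp [hN, hi] at hkN
      simp [Config.pivotConfig, hki]
  have hrow_r : ∀ r, r ∈ c.basic → r ≠ i → (c.pivotConfig i j).rowSum r β
      = (c.T r j / c.T i j) * β i
        + ∑ k ∈ N.erase j, (c.T r k - c.T r j * c.T i k / c.T i j) * β k := by
    intro r hr hri
    have hrj : r ≠ j := by rintro rfl; exact hj hr
    unfold Config.rowSum
    rw [hNB', Finset.sum_insert hiN]
    congr 1
    · simp [Config.pivotConfig, hrj]
    · refine Finset.sum_congr rfl fun k hk => ?_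
      have hkN : k ∈ N := Finset.mem_of_mem_erase hk
      have hki : k ≠ i := by
        rintro rfl; simp [hN, hi] at hkN
      simp [Config.pivotConfig, hrj, hki]
  have hrow_old : ∀ r, c.rowSum r β = c.T r j * β j + ∑ k ∈ N.erase j, c.T r k * β k := by
    intro r
    unfold Config.rowSum
    rw [← hN, ← Finset.add_sum_erase _ _ hjN]
  have hkeyj : (β j = (c.pivotConfig i j).rowSum j β) ↔ (β i = c.rowSum i β) := by
    rw [hrow_j, hrow_old i]
    have hsum : ∑ k ∈ N.erase j, -(c.T i k / c.T i j) * β k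
        = -(∑ k ∈ N.erase j, c.T i k * β k) / c.T i j := by
      rw [Finset.sum_congr rfl (fun k _ => by ring :
        ∀ k ∈ N.erase j, -(c.T i k / c.T i j) * β k = -(c.T i k * β k) / c.T i j),
        ← Finset.sum_div, Finset.sum_neg_distrib]
    rw [hsum]
    set S := ∑ k ∈ N.erase j, c.T i k * β k
    constructor <;> intro h <;> (field_simp at h ⊢) <;> linarith
  have hkeyr : ∀ r, (β i = c.rowSum i β) → r ∈ c.basic → r ≠ i →
      (c.pivotConfig i j).rowSum r β = c.rowSum r β := by
    intro r hE hr hri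
    rw [hrow_r r hr hri, hrow_old r]
    rw [hrow_old i] at hE
    have hsplit : ∑ k ∈ N.erase j, (c.T r k - c.T r j * c.T i k / c.T i j) * β k
        = (∑ k ∈ N.erase j, c.T r k * β k)
          - (c.T r j / c.T i j) * ∑ k ∈ N.erase j, c.T i k * β k := by
      rw [Finset.mul_sum, ← Finset.sum_sub_distrib]
      exact Finset.sum_congr rfl fun k _ => by ring
    rw [hsplit]
    set S := ∑ k ∈ N.erase j, c.T i k * β k
    set Sr := ∑ k ∈ N.erase j, c.T r k * β k
    rw [hE]
    field_simp
    ring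
  constructor
  · intro h'
    have hjB' : j ∈ (c.pivotConfig i j).basic := by simp [Config.pivotConfig]
    have hE : β i = c.rowSum i β := hkeyj.mp (h' j hjB')
    intro r hr
    by_cases hri : r = i
    · subst hri; exact hE
    · have hrB' : r ∈ (c.pivotConfig i j).basic := by
        simp only [Config.pivotConfig, Finset.mem_insert, Finset.mem_erase]
        exact Or.inr ⟨hri, hr⟩
      have := h' r hrB'
      rwa [hkeyr r hE hr hri] at this
  · intro h
    have hE : β i = c.rowSum i β := h i hi
    intro r hrB'
    rcases Finset.mem_insert.mp hrB' with rfl | hr'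
    · exact hkeyj.mpr hE
    · obtain ⟨hri, hr⟩ := Finset.mem_erase.mp hr'
      rw [hkeyr r hE hr hri]
      exact h r hr

lemma satTab_update (c : Config V) (j : V) (δ : ℝ) (hj : j ∉ c.basic)
    (h : c.SatTab c.α) : (c.updateConfig j δ).SatTab (c.updateConfig j δ).α := by
  intro r hr
  have hr' : r ∈ c.basic := hr
  have hrj : r ≠ j := by rintro rfl; exact hj hr'
  set N : Finset V := Finset.univ.filter (fun k => k ∉ c.basic) with hN
  have hjN : j ∈ N := by simp [hN, hj]
  set α' := (c.updateConfig j δ).α with hα'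
  have hrow : (c.updateConfig j δ).rowSum r α' = ∑ k ∈ N, c.T r k * α' k := by
    simp [Config.rowSum, Config.updateConfig, hN]
    congr 1
  have hα'r : α' r = c.α r + δ * c.T r j := by
    simp [hα', Config.updateConfig, hrj, hr']
  have hα'j : α' j = c.α j + δ := by simp [hα', Config.updateConfig]
  have hα'k : ∀ k ∈ N.erase j, α' k = c.α k := by
    intro k hk
    obtain ⟨hkj, hkN⟩ := Finset.mem_erase.mp hk
    have hkb : k ∉ c.basic := by simpa [hN] using hkN
    simp [hα', Config.updateConfig, hkj, hkb]
  have hold : c.α r = c.T r j * c.α j + ∑ k ∈ N.erase j, c.T r k * c.α k := by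
    have := h r hr'
    rwa [show c.rowSum r c.α = c.T r j * c.α j + ∑ k ∈ N.erase j, c.T r k * c.α k from by
      unfold Config.rowSum; rw [← hN, ← Finset.add_sum_erase _ _ hjN]] at this
  show α' r = (c.updateConfig j δ).rowSum r α'
  rw [hrow, ← Finset.add_sum_erase _ _ hjN, Finset.sum_congr rfl (fun k hk => by rw [hα'k k hk]),
    hα'r, hα'j, hold]
  ring

lemma inBounds_mono {c c' : Config V} (hl : ∀ x, c.l x ≤ c'.l x) (hu : ∀ x, c'.u x ≤ c.u x)
    {β : V → ℝ} (h : c'.InBounds β) : c.InBounds β :=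
  fun x => ⟨le_trans (hl x) (h x).1, le_trans (h x).2 (hu x)⟩

end Aux

section Main

variable {n : ℕ}

lemma init_rowSum (φ : Phi n) (a : Fin φ.lin.length) (β : Fin n ⊕ Fin φ.lin.length → ℝ) :
    φ.init.rowSum (Sum.inr a) β = ∑ j, (φ.lin.get a).coeff j * β (Sum.inl j) := by
  unfold Config.rowSum
  rw [Finset.sum_filter, Fintype.sum_sum_type]
  simp [Phi.init]

def RInv (φ : Phi n) (c : Config (Fin n ⊕ Fin φ.lin.length)) : Prop :=
  c.SatTab c.α ∧ (∀ β, c.SatTab β → φ.init.SatTab β) ∧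
    (∀ β, c.InBounds β → φ.init.InBounds β) ∧ c.R = φ.init.R

lemma inv_init (φ : Phi n) : RInv φ φ.init := by
  refine ⟨?_, fun β h => h, fun β h => h, rfl⟩
  intro r hr
  simp [Phi.init, Config.rowSum]

lemma success_sat (φ : Phi n) (c : Config (Fin n ⊕ Fin φ.lin.length))
    (hc : RInv φ c) (hb : c.InBounds c.α)
    (hr : ∀ p ∈ c.R, c.α p.2 = max 0 (c.α p.1)) :
    φ.Sat (fun j => c.α (Sum.inl j)) := by
  obtain ⟨h1, h2, h3, h4⟩ := hc
  have hsat : φ.init.SatTab c.α := h2 _ h1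
  have hbnd : φ.init.InBounds c.α := h3 _ hb
  constructor
  · intro a ha
    rw [List.mem_iff_get] at ha
    obtain ⟨idx, rfl⟩ := ha
    have hbasic : (Sum.inr idx : Fin n ⊕ Fin φ.lin.length) ∈ φ.init.basic := by
      simp [Phi.init]
    have heq : c.α (Sum.inr idx) = ∑ j, (φ.lin.get idx).coeff j * c.α (Sum.inl j) := by
      have := hsat _ hbasic
      rwa [init_rowSum] at this
    have hbl := (hbnd (Sum.inr idx)).1
    have hbu := (hbnd (Sum.inr idx)).2
    cases hrel : (φ.lin.get idx).rel with
    | eq =>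
      simp only [Phi.init, hrel] at hbl hbu
      simp only [LinAtom.Holds, hrel, ← heq]
      exact le_antisymm (by exact_mod_cast hbu) (by exact_mod_cast hbl)
    | le =>
      simp only [Phi.init, hrel] at hbu
      simp only [LinAtom.Holds, hrel, ← heq]
      exact_mod_cast hbu
    | ge =>
      simp only [Phi.init, hrel] at hbl
      simp only [LinAtom.Holds, hrel, ← heq]
      exact_mod_cast hbl
  · intro p hp
    have hmem : (Sum.inl p.1, Sum.inl p.2) ∈ c.R := by
      rw [h4]
      simp only [Phi.init, Finset.mem_image]
      exact ⟨p, hp, rfl⟩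
    exact hr _ hmem

lemma step_inv (φ : Phi n) {c : Config (Fin n ⊕ Fin φ.lin.length)}
    {ts : List (RConfig (Fin n ⊕ Fin φ.lin.length))}
    (h : Step c ts) (hc : RInv φ c) :
    (∀ c', RConfig.node c' ∈ ts → RInv φ c') ∧
    (RConfig.SAT ∈ ts → φ.Sat (fun j => c.α (Sum.inl j))) := by
  obtain ⟨h1, h2, h3, h4⟩ := hc
  cases h with
  | pivot1 i j hi hlo hj =>
    obtain ⟨hjb, hor⟩ := hj
    have hT : c.T i j ≠ 0 := by
      rcases hor with ⟨h', _⟩ | ⟨h', _⟩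
      · exact ne_of_gt h'
      · exact ne_of_lt h'
    refine ⟨?_, by simp⟩
    intro c' hc'
    simp only [List.mem_singleton, RConfig.node.injEq] at hc'
    subst hc'
    exact ⟨(satTab_pivot_iff c i j hi hjb hT c.α).mpr h1,
      fun β hβ => h2 β ((satTab_pivot_iff c i j hi hjb hT β).mp hβ),
      fun β hβ => h3 β hβ, h4⟩
  | pivot2 i j hi hhi hj =>
    obtain ⟨hjb, hor⟩ := hj
    have hT : c.T i j ≠ 0 := by
      rcases hor with ⟨h', _⟩ | ⟨h', _⟩
      · exact ne_of_lt h'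
      · exact ne_of_gt h'
    refine ⟨?_, by simp⟩
    intro c' hc'
    simp only [List.mem_singleton, RConfig.node.injEq] at hc'
    subst hc'
    exact ⟨(satTab_pivot_iff c i j hi hjb hT c.α).mpr h1,
      fun β hβ => h2 β ((satTab_pivot_iff c i j hi hjb hT β).mp hβ),
      fun β hβ => h3 β hβ, h4⟩
  | pivotForRelu i j hi hrel hjb hT =>
    refine ⟨?_, by simp⟩
    intro c' hc'
    simp only [List.mem_singleton, RConfig.node.injEq] at hc'
    subst hc'
    exact ⟨(satTab_pivot_iff c i j hi hjb hT c.α).mpr h1,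
      fun β hβ => h2 β ((satTab_pivot_iff c i j hi hjb hT β).mp hβ),
      fun β hβ => h3 β hβ, h4⟩
  | update j δ hjb hviol hlo hhi =>
    refine ⟨?_, by simp⟩
    intro c' hc'
    simp only [List.mem_singleton, RConfig.node.injEq] at hc'
    subst hc'
    exact ⟨satTab_update c j δ hjb h1, fun β hβ => h2 β hβ, fun β hβ => h3 β hβ, h4⟩
  | updateB i j hR hib hne hpos =>
    refine ⟨?_, by simp⟩
    intro c' hc'
    simp only [List.mem_singleton, RConfig.node.injEq] at hc'
    subst hc'
    exact ⟨satTab_update c i _ hib h1, fun β hβ => h2 β hβ, fun β hβ => h3 β hβ, h4⟩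
  | updateF i j hR hjb hne =>
    refine ⟨?_, by simp⟩
    intro c' hc'
    simp only [List.mem_singleton, RConfig.node.injEq] at hc'
    subst hc'
    exact ⟨satTab_update c j _ hjb h1, fun β hβ => h2 β hβ, fun β hβ => h3 β hβ, h4⟩
  | failure i hi h => exact ⟨by simp, by simp⟩
  | reluSplit i j hR hl hu =>
    refine ⟨?_, by simp⟩
    intro c' hc'
    simp only [List.mem_cons, RConfig.node.injEq, List.not_mem_nil, or_false] at hc'
    rcases hc' with rfl | rfl
    · refine ⟨h1, fun β hβ => h2 β hβ, ?_, h4⟩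
      intro β hβ
      refine h3 β (fun x => ⟨(hβ x).1, le_trans (hβ x).2 ?_⟩)
      show (if x = i then (0 : EReal) else c.u x) ≤ c.u x
      by_cases hx : x = i
      · subst hx; simp; exact le_of_lt hu
      · simp [hx]
    · refine ⟨h1, fun β hβ => h2 β hβ, ?_, h4⟩
      intro β hβ
      refine h3 β (fun x => ⟨le_trans ?_ (hβ x).1, (hβ x).2⟩)
      show c.l x ≤ (if x = i then (0 : EReal) else c.l x)
      by_cases hx : x = i
      · subst hx; simp; exact le_of_lt hl
      · simp [hx]
  | reluSuccess hb hr =>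
    exact ⟨by simp, fun _ => success_sat φ c ⟨h1, h2, h3, h4⟩ hb hr⟩
  | deriveLowerBound i hi h =>
    refine ⟨?_, by simp⟩
    intro c' hc'
    simp only [List.mem_singleton, RConfig.node.injEq] at hc'
    subst hc'
    refine ⟨h1, fun β hβ => h2 β hβ, ?_, h4⟩
    intro β hβ
    refine h3 β (fun x => ⟨le_trans ?_ (hβ x).1, (hβ x).2⟩)
    show c.l x ≤ (if x = i then c.derivedLower i else c.l x)
    by_cases hx : x = i
    · subst hx; simp; exact le_of_lt h
    · simp [hx]
  | deriveUpperBound i hi h =>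
    refine ⟨?_, by simp⟩
    intro c' hc'
    simp only [List.mem_singleton, RConfig.node.injEq] at hc'
    subst hc'
    refine ⟨h1, fun β hβ => h2 β hβ, ?_, h4⟩
    intro β hβ
    refine h3 β (fun x => ⟨(hβ x).1, le_trans (hβ x).2 ?_⟩)
    show (if x = i then c.derivedUpper i else c.u x) ≤ c.u x
    by_cases hx : x = i
    · subst hx; simp; exact le_of_lt h
    · simp [hx]

def RGood (φ : Phi n) (t : DTree (Fin n ⊕ Fin φ.lin.length)) : Prop :=
  (∀ c, DTree.Mem (RConfig.node c) t → RInv φ c) ∧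
  (∀ c ts, DTree.Sub (DTree.node (RConfig.node c) ts) t →
      (∃ t' ∈ ts, t'.root = RConfig.SAT) → φ.Sat (fun j => c.α (Sum.inl j))) ∧
  (DTree.LeafMem RConfig.SAT t → φ.Satisfiable)

lemma good_child {φ : Phi n} {s : RConfig (Fin n ⊕ Fin φ.lin.length)}
    {ts : List (DTree (Fin n ⊕ Fin φ.lin.length))} {t : DTree (Fin n ⊕ Fin φ.lin.length)}
    (hg : RGood φ (DTree.node s ts)) (ht : t ∈ ts) : RGood φ t :=
  ⟨fun c hm => hg.1 c (DTree.Mem.child hm ht),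
   fun c ts' hsub hex => hg.2.1 c ts' (DTree.Sub.child hsub ht) hex,
   fun hl => hg.2.2 (DTree.LeafMem.child hl ht)⟩

lemma expand_root {V : Type*} [Fintype V] [DecidableEq V] {t t' : DTree V}
    (h : Expand t t') : t'.root = t.root := by
  induction h with
  | here h => rfl
  | child h ih => rfl

lemma expand_good {φ : Phi n} {t t' : DTree (Fin n ⊕ Fin φ.lin.length)}
    (h : Expand t t') (hg : RGood φ t) : RGood φ t' := by
  induction h with
  | @here c ts hstep =>
    have hinv : RInv φ c := hg.1 c (DTree.Mem.leaf _)
    have hsi := step_inv φ hstep hinv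
    refine ⟨?_, ?_, ?_⟩
    · intro c' hm
      cases hm with
      | root => exact hinv
      | child hm' ht =>
        rw [List.mem_map] at ht
        obtain ⟨s, hs, rfl⟩ := ht
        cases hm'
        exact hsi.1 c' hs
    · intro c0 ts0 hsub hex
      cases hsub with
      | refl =>
        obtain ⟨t0, ht0, hroot⟩ := hex
        rw [List.mem_map] at ht0
        obtain ⟨s, hs, rfl⟩ := ht0
        have : s = RConfig.SAT := hroot
        subst this
        exact hsi.2 hs
      | child hsub' ht' =>
        rw [List.mem_map] at ht'
        obtain ⟨s, hs, rfl⟩ := ht'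
        cases hsub'
    · intro hl
      cases hl with
      | child hl' ht' =>
        rw [List.mem_map] at ht'
        obtain ⟨s, hs, rfl⟩ := ht'
        cases hl'
        exact ⟨_, hsi.2 hs⟩
  | @child s pre post tt tt' hexp ih =>
    have httmem : tt ∈ pre ++ tt :: post := by simp
    have htt : RGood φ tt := good_child hg httmem
    have htt' : RGood φ tt' := ih htt
    refine ⟨?_, ?_, ?_⟩
    · intro c' hm
      cases hm with
      | root => exact hg.1 c' (DTree.Mem.root _ _)
      | child hm' ht =>
        rw [List.mem_append, List.mem_cons] at ht
        rcases ht with hpre | rfl | hpost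
        · exact hg.1 c' (DTree.Mem.child hm' (by simp [hpre]))
        · exact htt'.1 c' hm'
        · exact hg.1 c' (DTree.Mem.child hm' (by simp [hpost]))
    · intro c0 ts0 hsub hex
      cases hsub with
      | refl =>
        obtain ⟨t0, ht0, hroot⟩ := hex
        rw [List.mem_append, List.mem_cons] at ht0
        rcases ht0 with hpre | rfl | hpost
        · exact hg.2.1 c0 _ (DTree.Sub.refl _) ⟨t0, by simp [hpre], hroot⟩
        · refine hg.2.1 c0 _ (DTree.Sub.refl _) ⟨tt, by simp, ?_⟩
          rw [← expand_root hexp]; exact hroot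
        · exact hg.2.1 c0 _ (DTree.Sub.refl _) ⟨t0, by simp [hpost], hroot⟩
      | child hsub' ht' =>
        rw [List.mem_append, List.mem_cons] at ht'
        rcases ht' with hpre | rfl | hpost
        · exact hg.2.1 c0 ts0 (DTree.Sub.child hsub' (by simp [hpre])) hex
        · exact htt'.2.1 c0 ts0 hsub' hex
        · exact hg.2.1 c0 ts0 (DTree.Sub.child hsub' (by simp [hpost])) hex
    · intro hl
      cases hl with
      | child hl' ht' =>
        rw [List.mem_append, List.mem_cons] at ht'
        rcases ht' with hpre | rfl | hpost
        · exact hg.2.2 (DTree.LeafMem.child hl' (by simp [hpre]))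
        · exact htt'.2.2 hl'
        · exact hg.2.2 (DTree.LeafMem.child hl' (by simp [hpost]))

end Main

/-- soundness of Reluplex, satisfiable case. If there is a witness
from `φ` — a derivation from the initial configuration of `φ` ending in a tree with
at least one `SAT` leaf — then `φ` is satisfiable; moreover the assignment `α` of any
node to which the `ReluSuccess` rule was applied (i.e., any node with a `SAT` child
in some tree of the derivation), restricted to the original variables, satisfies
every atom of `φ`. -/
theorem reluplex_sound_sat {n : ℕ} (φ : Phi n)
    (m : ℕ) (D : ℕ → DTree (Fin n ⊕ Fin φ.lin.length))
    (hD : IsDerivation φ.init m D)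
    (hwit : DTree.LeafMem RConfig.SAT (D m)) :
    φ.Satisfiable ∧
      ∀ i ≤ m, ∀ (c : Config (Fin n ⊕ Fin φ.lin.length))
        (ts : List (DTree (Fin n ⊕ Fin φ.lin.length))),
        DTree.Sub (DTree.node (RConfig.node c) ts) (D i) →
        (∃ t ∈ ts, t.root = RConfig.SAT) →
        φ.Sat (fun j => c.α (Sum.inl j)) := by
  have hgood : ∀ i ≤ m, RGood φ (D i) := by
    intro i hi
    induction i with
    | zero =>
      rw [hD.1]
      refine ⟨?_, ?_, ?_⟩
      · intro c hm
        cases hm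
        exact inv_init φ
      · intro c ts hsub hex
        cases hsub
      · intro hl
        cases hl
    | succ k ih =>
      exact expand_good (hD.2 k (lt_of_lt_of_le (Nat.lt_succ_self k) hi))
        (ih (le_of_lt (lt_of_lt_of_le (Nat.lt_succ_self k) hi)))
  exact ⟨(hgood m le_rfl).2.2 hwit, fun i hi c ts hsub hex => (hgood i hi).2.1 c ts hsub hex⟩
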